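/- For every integer t ≥ 1, the sum over pairs (c,d) of positive integers with c+d=t of binomial(t,c)·c^{c-1}·d^{d-1} equals 2·(t-1)·t^{t-2}. -/

import Mathlib

open Finset

noncomputable def abP : ℕ → ℝ → ℝ
  | 0, _ => 1
  | (n+1), x => x * (x + (n+1 : ℕ)) ^ n

lemma Ab_zero (x : ℝ) : abP 0 x = 1 := rfl

lemma Ab_pos {k : ℕ} (hk : 1 ≤ k) (x : ℝ) : abP k x = x * (x + (k:ℕ)) ^ (k-1) := by
  obtain ⟨m, rfl⟩ := Nat.exists_eq_add_of_le hk
  simp [abP, Nat.add_comm]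

lemma Ab_at_zero {k : ℕ} (hk : 1 ≤ k) : abP k 0 = 0 := by
  rw [Ab_pos hk]; ring

lemma hasDerivAt_abP (k : ℕ) (x : ℝ) :
    HasDerivAt (abP k) ((k : ℝ) * abP (k-1) (x+1)) x := by
  match k with
  | 0 =>
    have e : abP 0 = fun _ : ℝ => (1:ℝ) := funext fun x => rfl
    rw [e]
    simpa using hasDerivAt_const x (1:ℝ)
  | 1 =>
    have e : abP 1 = fun x : ℝ => x * (x + ((1:ℕ):ℝ)) ^ 0 := funext fun x => rfl
    rw [e]
    simpa [abP] using (hasDerivAt_id' x)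
  | (m+2) =>
    have e : abP (m+2) = fun x : ℝ => x * (x + ((m+2:ℕ):ℝ)) ^ (m+1) := funext fun x => rfl
    rw [e]
    have h1 : HasDerivAt (fun x : ℝ => x + ((m+2:ℕ):ℝ)) 1 x := (hasDerivAt_id x).add_const _
    have h2 := (hasDerivAt_id' x).fun_mul (h1.fun_pow (m+1))
    simp only [id_eq, one_mul, mul_one, Nat.add_sub_cancel] at h2
    refine h2.congr_deriv ?_
    have e2 : abP (m+2-1) (x+1) = (x+1) * ((x+1) + ((m+1:ℕ):ℝ)) ^ m := rfl
    rw [e2]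
    push_cast
    ring

lemma Ab_binomial (n : ℕ) : ∀ x y : ℝ,
    ∑ k ∈ range (n+1), (n.choose k : ℝ) * abP k x * abP (n-k) y = abP n (x+y) := by
  induction n with
  | zero => intro x y; simp [abP]
  | succ n ih =>
    intro x y
    set f : ℝ → ℝ := fun x => ∑ k ∈ range (n+2), ((n+1).choose k : ℝ) * abP k x * abP (n+1-k) y with hf
    set g : ℝ → ℝ := fun x => abP (n+1) (x+y) with hg
    have hfd : ∀ x : ℝ, HasDerivAt f
        (∑ k ∈ range (n+2), ((n+1).choose k : ℝ) * ((k:ℝ) * abP (k-1) (x+1)) * abP (n+1-k) y) x := by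
      intro x
      apply HasDerivAt.fun_sum
      intro k _
      exact ((hasDerivAt_abP k x).const_mul _).mul_const _
    have hderiv_eq : ∀ x : ℝ,
        (∑ k ∈ range (n+2), ((n+1).choose k : ℝ) * ((k:ℝ) * abP (k-1) (x+1)) * abP (n+1-k) y)
          = ((n:ℝ)+1) * abP n (x+1+y) := by
      intro x
      rw [Finset.sum_range_succ']
      simp only [Nat.cast_zero, mul_zero, zero_mul, add_zero, Nat.add_sub_cancel,
        Nat.succ_sub_succ, Nat.sub_zero]
      have key : ∀ k ∈ range (n+1), ((n+1).choose (k+1) : ℝ) * (((k+1:ℕ):ℝ) * abP k (x+1)) * abP (n-k) y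
          = ((n:ℝ)+1) * ((n.choose k : ℝ) * abP k (x+1) * abP (n-k) y) := by
        intro k _
        have hc : (n+1) * n.choose k = (n+1).choose (k+1) * (k+1) := Nat.add_one_mul_choose_eq n k
        have hc' : ((n:ℝ)+1) * (n.choose k : ℝ) = ((n+1).choose (k+1) : ℝ) * ((k:ℝ)+1) := by
          exact_mod_cast congrArg (Nat.cast (R := ℝ)) hc
        push_cast
        linear_combination (abP k (x+1) * abP (n-k) y) * hc'.symm
      rw [Finset.sum_congr rfl key, ← Finset.mul_sum, ih (x+1) y]
    have hgd : ∀ x : ℝ, HasDerivAt g (((n:ℝ)+1) * abP n (x+1+y)) x := by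
      intro x
      have := (hasDerivAt_abP (n+1) (x+y)).comp x ((hasDerivAt_id x).add_const y)
      simp only [Function.comp_def, mul_one, Nat.add_sub_cancel] at this
      rw [hg]
      rw [show x+1+y = x+y+1 by ring]
      refine this.congr_deriv ?_
      push_cast
      ring
    have key : ∀ x : ℝ, f x - g x = f 0 - g 0 := by
      intro x
      apply is_const_of_deriv_eq_zero (f := fun x => f x - g x)
      · intro z
        exact ((hfd z).sub (hgd z)).differentiableAt
      · intro z
        rw [((hfd z).fun_sub (hgd z)).deriv, hderiv_eq z, sub_self]
    have h0 : f 0 = g 0 := by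
      rw [hf, hg]
      simp only [zero_add]
      rw [Finset.sum_range_succ']
      have : ∀ k ∈ range (n+1), ((n+1).choose (k+1) : ℝ) * abP (k+1) 0 * abP (n+1-(k+1)) y = 0 := by
        intro k _
        rw [Ab_at_zero (Nat.le_add_left 1 k)]; ring
      rw [Finset.sum_congr rfl this]
      simp [Ab_zero]
    have := key x
    rw [h0, sub_self, sub_eq_zero] at this
    exact this

theorem abel_identity_c_minus_one (t : ℕ) (ht : 1 ≤ t) :
    ∑ c ∈ Finset.Ico 1 t, t.choose c * c ^ (c - 1) * (t - c) ^ (t - c - 1)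
      = 2 * (t - 1) * t ^ (t - 2) := by
  -- real-valued middle sum
  set g : ℝ → ℝ := fun x =>
    ∑ k ∈ Finset.Ico 1 t, (t.choose k : ℝ) * (x + (k:ℕ)) ^ (k-1) * (x + ((t-k:ℕ):ℝ)) ^ (t-k-1)
    with hgdef
  -- split the binomial identity at y = x
  have split : ∀ x : ℝ, abP t (2*x) = abP t x + x^2 * g x + abP t x := by
    intro x
    have hb := Ab_binomial t x x
    rw [Finset.sum_range_succ] at hb
    rw [Finset.sum_range_eq_add_Ico _ (by omega : 0 < t)] at hb
    have hmid : ∑ k ∈ Finset.Ico 1 t, (t.choose k : ℝ) * abP k x * abP (t-k) x = x^2 * g x := by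
      rw [hgdef, Finset.mul_sum]
      apply Finset.sum_congr rfl
      intro k hk
      rw [Finset.mem_Ico] at hk
      rw [Ab_pos hk.1, Ab_pos (by omega : 1 ≤ t - k)]
      ring
    rw [hmid] at hb
    simp only [Nat.choose_zero_right, Nat.cast_one, Ab_zero, Nat.sub_zero, one_mul, mul_one,
      Nat.choose_self, Nat.sub_self] at hb
    rw [show x + x = 2*x by ring] at hb
    linarith [hb]
  -- h x := 2(2x+t)^{t-1} - 2(x+t)^{t-1}
  set h : ℝ → ℝ := fun x => 2*(2*x + (t:ℝ))^(t-1) - 2*(x + (t:ℝ))^(t-1) with hhdef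
  have hxg : ∀ x : ℝ, x * g x = h x := by
    intro x
    rcases eq_or_ne x 0 with rfl | hx
    · simp [hhdef]
    · have hs := split x
      rw [Ab_pos ht, Ab_pos ht] at hs
      apply mul_left_cancel₀ hx
      show x * (x * g x) = x * (2 * (2*x + (t:ℝ))^(t-1) - 2*(x + (t:ℝ))^(t-1))
      linear_combination -hs
  -- derivative of g at 0 exists
  have hgdiff : DifferentiableAt ℝ g 0 := by
    apply DifferentiableAt.fun_sum
    intro k _
    exact (((differentiableAt_id.add_const _).pow _).const_mul _).mul
      ((differentiableAt_id.add_const _).pow _)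
  have hgd : HasDerivAt g (deriv g 0) 0 := hgdiff.hasDerivAt
  have h1 : HasDerivAt (fun x : ℝ => x * g x) (g 0) 0 := by
    have := (hasDerivAt_id' (0:ℝ)).fun_mul hgd
    simpa using this
  have h2 : HasDerivAt h (2 * ((t-1:ℕ):ℝ) * (t:ℝ)^(t-2)) 0 := by
    have ha : HasDerivAt (fun x : ℝ => 2*x + (t:ℝ)) 2 0 := by
      simpa using ((hasDerivAt_id (0:ℝ)).const_mul 2).add_const (t:ℝ)
    have hb : HasDerivAt (fun x : ℝ => x + (t:ℝ)) 1 0 := (hasDerivAt_id 0).add_const _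
    have := ((ha.fun_pow (t-1)).const_mul 2).fun_sub ((hb.fun_pow (t-1)).const_mul 2)
    have e : t - 1 - 1 = t - 2 := by omega
    refine this.congr_deriv ?_
    simp only [mul_zero, zero_add, mul_one, e]
    ring
  have heq : g 0 = 2 * ((t-1:ℕ):ℝ) * (t:ℝ)^(t-2) := by
    have : HasDerivAt (fun x : ℝ => x * g x) (2 * ((t-1:ℕ):ℝ) * (t:ℝ)^(t-2)) 0 := by
      have : (fun x : ℝ => x * g x) = h := funext hxg
      rw [this]; exact h2
    exact h1.unique this
  have hcast : g 0 = ((∑ c ∈ Finset.Ico 1 t, t.choose c * c ^ (c - 1) * (t - c) ^ (t - c - 1) : ℕ) : ℝ) := by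
    rw [hgdef]
    push_cast
    apply Finset.sum_congr rfl
    intro k _
    norm_num
  have : ((∑ c ∈ Finset.Ico 1 t, t.choose c * c ^ (c - 1) * (t - c) ^ (t - c - 1) : ℕ) : ℝ)
      = ((2 * (t - 1) * t ^ (t - 2) : ℕ) : ℝ) := by
    rw [← hcast, heq]
    push_cast
    ring
  exact_mod_cast this
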